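/- Let G₁(x,y) = (−(1/4)·x³/y⁴ + (5/12)·x²/y³ − (1/6)·x/y², (1/8)·x²/y³ − (5/24)·x/y² + (1/12)·(1/y)). For x > 0 and y > 0, one has G₁(x,y) = (0,0) if and only if x = y or x = (2/3)·y. In particular, the points (√(c(1)), √(c(1))) with c(1) = (2π²)^{−2/3} and ((2/3)·√(c(2/3)), √(c(2/3))) with c(2/3) = (4π²/3)^{−2/3} are equilibria; the latter corresponds to a critical point of the volume-normalized spinor flow on S³ which is not a Killing spinor. -/

import Mathlib

open Real Filter Set Topology
open scoped ENNReal

/-- The vector field of the volume-normalized spinor-flow system on Berger spheres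
in the case `aμ = 1`. -/
noncomputable def G1 (x y : ℝ) : ℝ × ℝ :=
  (-(1/4) * x^3 / y^4 + (5/12) * x^2 / y^3 - (1/6) * x / y^2,
   (1/8) * x^2 / y^3 - (5/24) * x / y^2 + (1/12) * (1/y))

lemma G1_key (x y : ℝ) (hx : 0 < x) (hy : 0 < y) :
    G1 x y = (0, 0) ↔ x = y ∨ x = (2/3) * y := by
  unfold G1
  rw [Prod.mk.injEq]
  constructor
  · rintro ⟨-, h2⟩
    have hy' : y ≠ 0 := ne_of_gt hy
    have h3 : y^3 * ((x - y) * (3 * x - 2 * y)) = 0 := by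
      have := h2
      field_simp at this
      linear_combination (y^3/96 : ℝ) * this
    have h : (x - y) * (3 * x - 2 * y) = 0 :=
      (mul_eq_zero.mp h3).resolve_left (pow_ne_zero 3 hy')
    rcases mul_eq_zero.mp h with h | h
    · left; linarith
    · right; linarith
  · have hy' : y ≠ 0 := ne_of_gt hy
    rintro (h | h) <;> subst h <;> constructor <;> field_simp <;> ring

/-- For `x, y > 0`, `G₁(x,y) = 0` iff `x = y` or `x = (2/3)y`. In particular the
volume-normalized round metric `(√c(1), √c(1))` with `c(1) = (2π²)^(-2/3)` and the
point `((2/3)√c(2/3), √c(2/3))` with `c(2/3) = (4π²/3)^(-2/3)` are equilibria (the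
latter being a critical point of the normalized spinor flow which is not a Killing
spinor). -/
theorem G1_equilibria :
    (∀ x y : ℝ, 0 < x → 0 < y → (G1 x y = (0, 0) ↔ x = y ∨ x = (2/3) * y)) ∧
    G1 (Real.sqrt ((2 * π^2) ^ (-(2:ℝ)/3))) (Real.sqrt ((2 * π^2) ^ (-(2:ℝ)/3))) = (0, 0) ∧
    G1 ((2/3) * Real.sqrt ((4 * π^2 / 3) ^ (-(2:ℝ)/3)))
        (Real.sqrt ((4 * π^2 / 3) ^ (-(2:ℝ)/3))) = (0, 0) := by
  have hpi := Real.pi_pos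
  have h1 : (0:ℝ) < Real.sqrt ((2 * π^2) ^ (-(2:ℝ)/3)) :=
    Real.sqrt_pos.mpr (Real.rpow_pos_of_pos (by positivity) _)
  have h2 : (0:ℝ) < Real.sqrt ((4 * π^2 / 3) ^ (-(2:ℝ)/3)) :=
    Real.sqrt_pos.mpr (Real.rpow_pos_of_pos (by positivity) _)
  refine ⟨fun x y hx hy => G1_key x y hx hy, ?_, ?_⟩
  · exact (G1_key _ _ h1 h1).mpr (Or.inl rfl)
  · exact (G1_key _ _ (by positivity) h2).mpr (Or.inr rfl)
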